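/- For each η ∈ ℝ, the vectors F₀(η) = (√2(1+η²)/√((η²+2)(5η²+8))) χ₀ − (√(3η²+6)/√(5η²+8)) χ₄ and F_{±1}(η) = (√(3η²+3)/√(10η²+16)) χ₀ ∓ (√2/2) χ₁ + (√(η²+1)/√(5η²+8)) χ₄ (together with F₂ = χ₂, F₃ = χ₃) satisfy the orthonormality relations (F_j(η), F_k(η))_η = δ_{jk} for −1 ≤ j, k ≤ 3, where (f,g)_η = (f,g) + (1+η²)^{-1}(P_d f, P_d g) and P_d f = (f, χ₀) χ₀. -/

import Mathlib

/-- The vectors `F₋₁(η), F₀(η), F₁(η), F₂, F₃` expressed in the orthonormal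
basis `{χ₀,χ₁,χ₂,χ₃,χ₄}` of `N₀`; index `0 ↦ F₋₁`, `1 ↦ F₀`, `2 ↦ F₁`,
`3 ↦ F₂`, `4 ↦ F₃`. -/
noncomputable def Fvec (η : ℝ) : Fin 5 → Fin 5 → ℝ
  | 0 => ![Real.sqrt (3 * η ^ 2 + 3) / Real.sqrt (10 * η ^ 2 + 16),
           Real.sqrt 2 / 2, 0, 0,
           Real.sqrt (η ^ 2 + 1) / Real.sqrt (5 * η ^ 2 + 8)]
  | 1 => ![Real.sqrt 2 * (1 + η ^ 2) / Real.sqrt ((η ^ 2 + 2) * (5 * η ^ 2 + 8)),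
           0, 0, 0, -(Real.sqrt (3 * η ^ 2 + 6) / Real.sqrt (5 * η ^ 2 + 8))]
  | 2 => ![Real.sqrt (3 * η ^ 2 + 3) / Real.sqrt (10 * η ^ 2 + 16),
           -(Real.sqrt 2 / 2), 0, 0,
           Real.sqrt (η ^ 2 + 1) / Real.sqrt (5 * η ^ 2 + 8)]
  | 3 => ![0, 0, 1, 0, 0]
  | 4 => ![0, 0, 0, 1, 0]

/-- The weighted inner product `(f,g)_η = (f,g) + (1+η²)⁻¹ (P_d f, P_d g)`,
in coordinates with respect to the orthonormal basis `{χ₀,…,χ₄}`, where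
`P_d` is the projection onto `span{χ₀}`. -/
noncomputable def innerEta (η : ℝ) (a b : Fin 5 → ℝ) : ℝ :=
  (∑ i, a i * b i) + (1 + η ^ 2)⁻¹ * (a 0 * b 0)

open Real in
private lemma key00 (η : ℝ) :
    √(3 * η ^ 2 + 3) / √(10 * η ^ 2 + 16) * (√(3 * η ^ 2 + 3) / √(10 * η ^ 2 + 16)) +
        √2 / 2 * (√2 / 2) +
        √(η ^ 2 + 1) / √(5 * η ^ 2 + 8) * (√(η ^ 2 + 1) / √(5 * η ^ 2 + 8)) +
      (1 + η ^ 2)⁻¹ *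
        (√(3 * η ^ 2 + 3) / √(10 * η ^ 2 + 16) * (√(3 * η ^ 2 + 3) / √(10 * η ^ 2 + 16))) =
    1 := by
  have h1 : √(3*η^2+3) * √(3*η^2+3) = 3*η^2+3 := Real.mul_self_sqrt (by positivity)
  have h2 : √(10*η^2+16) * √(10*η^2+16) = 10*η^2+16 := Real.mul_self_sqrt (by positivity)
  have h3 : √(η^2+1) * √(η^2+1) = η^2+1 := Real.mul_self_sqrt (by positivity)
  have h4 : √(5*η^2+8) * √(5*η^2+8) = 5*η^2+8 := Real.mul_self_sqrt (by positivity)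
  have h5 : √2 * √2 = 2 := Real.mul_self_sqrt (by norm_num)
  have hp : (0:ℝ) < 1 + η^2 := by positivity
  simp only [div_mul_div_comm]
  rw [h1, h2, h3, h4, h5]
  field_simp
  ring

open Real in
private lemma key11 (η : ℝ) :
    √2 * (1 + η ^ 2) / √((η ^ 2 + 2) * (5 * η ^ 2 + 8)) *
        (√2 * (1 + η ^ 2) / √((η ^ 2 + 2) * (5 * η ^ 2 + 8))) +
        √(3 * η ^ 2 + 6) / √(5 * η ^ 2 + 8) * (√(3 * η ^ 2 + 6) / √(5 * η ^ 2 + 8)) +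
      (1 + η ^ 2)⁻¹ *
        (√2 * (1 + η ^ 2) / √((η ^ 2 + 2) * (5 * η ^ 2 + 8)) *
          (√2 * (1 + η ^ 2) / √((η ^ 2 + 2) * (5 * η ^ 2 + 8)))) =
    1 := by
  have h1 : √((η^2+2)*(5*η^2+8)) * √((η^2+2)*(5*η^2+8)) = (η^2+2)*(5*η^2+8) :=
    Real.mul_self_sqrt (by positivity)
  have h2 : √(3*η^2+6) * √(3*η^2+6) = 3*η^2+6 := Real.mul_self_sqrt (by positivity)
  have h4 : √(5*η^2+8) * √(5*η^2+8) = 5*η^2+8 := Real.mul_self_sqrt (by positivity)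
  have h5 : √2 * √2 = 2 := Real.mul_self_sqrt (by norm_num)
  have hp : (0:ℝ) < 1 + η^2 := by positivity
  simp only [div_mul_div_comm]
  rw [h1, h2, h4, show √2*(1+η^2)*(√2*(1+η^2)) = 2*(1+η^2)^2 by
    rw [show √2*(1+η^2)*(√2*(1+η^2)) = √2*√2*(1+η^2)^2 by ring, h5]]
  field_simp
  ring

open Real in
private lemma key01 (η : ℝ) :
    √(3 * η ^ 2 + 3) / √(10 * η ^ 2 + 16) *
        (√2 * (1 + η ^ 2) / √((η ^ 2 + 2) * (5 * η ^ 2 + 8))) +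
        -(√(η ^ 2 + 1) / √(5 * η ^ 2 + 8) * (√(3 * η ^ 2 + 6) / √(5 * η ^ 2 + 8))) +
      (1 + η ^ 2)⁻¹ *
        (√(3 * η ^ 2 + 3) / √(10 * η ^ 2 + 16) *
          (√2 * (1 + η ^ 2) / √((η ^ 2 + 2) * (5 * η ^ 2 + 8)))) =
    0 := by
  set a := √(η^2+1) with ha0
  set b := √(η^2+2) with hb0
  set c := √(5*η^2+8) with hc0
  have ha : a*a = η^2+1 := Real.mul_self_sqrt (by positivity)
  have hb : b*b = η^2+2 := Real.mul_self_sqrt (by positivity)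
  have hc : c*c = 5*η^2+8 := Real.mul_self_sqrt (by positivity)
  have hapos : 0 < a := Real.sqrt_pos.2 (by positivity)
  have hbpos : 0 < b := Real.sqrt_pos.2 (by positivity)
  have hcpos : 0 < c := Real.sqrt_pos.2 (by positivity)
  have h2pos : (0:ℝ) < √2 := Real.sqrt_pos.2 (by norm_num)
  have f1 : √(3*η^2+3) = √3 * a := by
    rw [show 3*η^2+3 = 3*(η^2+1) by ring, Real.sqrt_mul (by norm_num), ha0]
  have f2 : √(10*η^2+16) = √2 * c := by
    rw [show 10*η^2+16 = 2*(5*η^2+8) by ring, Real.sqrt_mul (by norm_num), hc0]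
  have f3 : √((η^2+2)*(5*η^2+8)) = b * c := Real.sqrt_mul (by positivity) _
  have f4 : √(3*η^2+6) = √3 * b := by
    rw [show 3*η^2+6 = 3*(η^2+2) by ring, Real.sqrt_mul (by norm_num), hb0]
  have hA : 1+η^2 = a*a := by rw [ha]; ring
  have hb' : b*b = a*a + 1 := by rw [ha, hb]; ring
  rw [f1, f2, f3, f4, hA]
  field_simp
  ring_nf
  linear_combination (-(Real.sqrt 3 * a)) * hb'

/-- Orthonormality `(F_j(η), F_k(η))_η = δ_{jk}` for `-1 ≤ j,k ≤ 3`. -/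
theorem stmt_3 (η : ℝ) (j k : Fin 5) :
    innerEta η (Fvec η j) (Fvec η k) = if j = k then (1 : ℝ) else 0 := by
  have h5 : Real.sqrt 2 * Real.sqrt 2 = 2 := Real.mul_self_sqrt (by norm_num)
  fin_cases j <;> fin_cases k <;>
    simp [Fvec, innerEta, Fin.sum_univ_five] <;>
    first
      | exact key00 η
      | exact key11 η
      | exact key01 η
      | linear_combination key01 η
      | linear_combination key00 η - (1/2) * h5
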